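/- Let P be the 3rd order, 3-dimensional stochastic tensor with frontal slices P(:,:,1) = [[0,0,0],[1,0,0],[0,1,1]], P(:,:,2) = [[0,0,0],[0,0,0],[1,1,1]], P(:,:,3) = [[0,0,1],[0,0,0],[1,1,0]] (so the (i1,i2) entry of P(:,:,i3) is p_{i1 i2 i3}). Then P is irreducible, but for every k ≥ 2 and all i2, i3 ∈ {1,2,3} one has p^{(k)}_{2 i2 i3} = 0; in particular P is not ergodic. Hence an irreducible higher order Markov chain need not be ergodic. -/

import Mathlib

open Finset

/-- A 3rd order, `n`-dimensional tensor: entry `p_{i₁ i₂ i₃}` is `P i₁ i₂ i₃`. -/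
abbrev Tensor3 (n : ℕ) := Fin n → Fin n → Fin n → ℝ

/-- The product `A ⊠ B`: `(A ⊠ B)_{i₁ i₂ i₃} = Σ_j a_{i₁ j i₂} b_{j i₂ i₃}`. -/
def tmul3 {n : ℕ} (A B : Tensor3 n) : Tensor3 n :=
  fun i₁ i₂ i₃ => ∑ j : Fin n, A i₁ j i₂ * B j i₂ i₃

/-- Tensor powers: `tpow3 P k` is `P^k`, with entries the `k`-step transition
probabilities `p^{(k)}_{i₁ i₂ i₃}`; `P^0` is the identity tensor. -/
def tpow3 {n : ℕ} (P : Tensor3 n) : ℕ → Tensor3 n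
  | 0 => fun i₁ i₂ _ => if i₁ = i₂ then 1 else 0
  | k + 1 => tmul3 (tpow3 P k) P

/-- `fpp3 P k` is the `(k+1)`-step first passage probability tensor `F^{[k+1]}`:
`f^{[1]} = p` and `f^{[k+1]}_{i₁ i₂ i₃} = Σ_{j ≠ i₁} f^{[k]}_{i₁ j i₂} p_{j i₂ i₃}`. -/
def fpp3 {n : ℕ} (P : Tensor3 n) : ℕ → Tensor3 n
  | 0 => P
  | k + 1 => fun i₁ i₂ i₃ =>
      ∑ j ∈ Finset.univ.filter (fun j => j ≠ i₁), fpp3 P k i₁ j i₂ * P j i₂ i₃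

/-- The ever-reaching probability `f_{i₁ i₂ i₃} = Σ_{k=1}^∞ f^{[k]}_{i₁ i₂ i₃}`. -/
noncomputable def everReach3 {n : ℕ} (P : Tensor3 n) : Tensor3 n :=
  fun i₁ i₂ i₃ => ∑' k : ℕ, fpp3 P k i₁ i₂ i₃

/-- State `j` is reachable from state `i` (`i → j`): for every `i₃` there is
`k ≥ 0` with `p^{(k)}_{j i i₃} > 0`. -/
def Reach3 {n : ℕ} (P : Tensor3 n) (i j : Fin n) : Prop :=
  ∀ i₃ : Fin n, ∃ k : ℕ, 0 < tpow3 P k j i i₃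

/-- The chain is irreducible: for every nonempty proper `K ⊊ S` there are
`i₁ ∈ K` and `i₂, i₃ ∉ K` with `p_{i₁ i₂ i₃} > 0`. -/
def Irreducible3 {n : ℕ} (P : Tensor3 n) : Prop :=
  ∀ K : Set (Fin n), K.Nonempty → K ≠ Set.univ →
    ∃ i₁ ∈ K, ∃ i₂, i₂ ∉ K ∧ ∃ i₃, i₃ ∉ K ∧ 0 < P i₁ i₂ i₃

/-- The chain is ergodic: for all `i₁ i₂ i₃` there is `k ≥ 1` with `p^{(k)}_{i₁ i₂ i₃} > 0`. -/
def Ergodic3 {n : ℕ} (P : Tensor3 n) : Prop :=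
  ∀ i₁ i₂ i₃ : Fin n, ∃ k : ℕ, 1 ≤ k ∧ 0 < tpow3 P k i₁ i₂ i₃

/-- The reduced transition matrix `Q` of a second order chain: rows and columns
are indexed by pairs, `Q (i₁,i₂) (j₁,j₂) = p_{i₁ i₂ j₂}` if `j₁ = i₂`, else `0`. -/
def reduced3 {n : ℕ} (P : Tensor3 n) : Matrix (Fin n × Fin n) (Fin n × Fin n) ℝ :=
  fun u v => if v.1 = u.2 then P u.1 u.2 v.2 else 0

/-- The transition tensor of Statement 8 (states `1,2,3` are `0,1,2 : Fin 3`);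
the `(i₁, i₂)` entry of the frontal slice `P(:,:,i₃)` is `p_{i₁ i₂ i₃}`. -/
def P8 : Tensor3 3 := fun i₁ i₂ i₃ =>
  ![!![(0:ℝ), 0, 0; 1, 0, 0; 0, 1, 1],
    !![0, 0, 0; 0, 0, 0; 1, 1, 1],
    !![0, 0, 1; 0, 0, 0; 1, 1, 0]] i₃ i₁ i₂

lemma tpow2_zero : ∀ i₂ i₃ : Fin 3, tpow3 P8 2 1 i₂ i₃ = 0 := by
  norm_num [tpow3, tmul3, P8, Fin.sum_univ_three, Fin.forall_fin_succ, Matrix.cons_val_zero, Matrix.cons_val_one, Matrix.cons_val_two, Matrix.vecHead, Matrix.vecTail]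

lemma tpow_zero : ∀ k : ℕ, 2 ≤ k → ∀ i₂ i₃ : Fin 3, tpow3 P8 k 1 i₂ i₃ = 0 := by
  intro k hk
  induction k with
  | zero => omega
  | succ n ih =>
    rcases Nat.lt_or_ge n 2 with h | h
    · interval_cases n
      · omega
      · exact tpow2_zero
    · intro i₂ i₃
      show tmul3 (tpow3 P8 n) P8 1 i₂ i₃ = 0
      unfold tmul3
      apply Finset.sum_eq_zero
      intro j _
      rw [ih h j i₂]
      ring

/-- `P8` is irreducible, yet `p^{(k)}_{2 i₂ i₃} = 0` for all `k ≥ 2`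
and all `i₂, i₃` (state `2` is index `1`); in particular `P8` is not ergodic. -/
theorem irreducible_not_ergodic :
    Irreducible3 P8 ∧
    (∀ k : ℕ, 2 ≤ k → ∀ i₂ i₃ : Fin 3, tpow3 P8 k 1 i₂ i₃ = 0) ∧
    ¬ Ergodic3 P8 := by
  refine ⟨?_, tpow_zero, ?_⟩
  · intro K hne hprop
    by_cases h0 : (0 : Fin 3) ∈ K <;> by_cases h1 : (1 : Fin 3) ∈ K <;>
      by_cases h2 : (2 : Fin 3) ∈ K
    · exact absurd (Set.eq_univ_iff_forall.mpr (by intro x; fin_cases x <;> assumption)) hprop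
    · exact ⟨0, h0, 2, h2, 2, h2, by norm_num [P8, Matrix.cons_val_two, Matrix.vecHead, Matrix.vecTail]⟩
    · exact ⟨2, h2, 1, h1, 1, h1, by norm_num [P8, Matrix.cons_val_two, Matrix.vecHead, Matrix.vecTail]⟩
    · exact ⟨0, h0, 2, h2, 2, h2, by norm_num [P8, Matrix.cons_val_two, Matrix.vecHead, Matrix.vecTail]⟩
    · exact ⟨1, h1, 0, h0, 0, h0, by norm_num [P8]⟩
    · exact ⟨1, h1, 0, h0, 0, h0, by norm_num [P8]⟩
    · exact ⟨2, h2, 0, h0, 1, h1, by norm_num [P8, Matrix.cons_val_two, Matrix.vecHead, Matrix.vecTail]⟩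
    · exact absurd (hne.elim fun x hx => by fin_cases x <;> [exact h0 hx; exact h1 hx; exact h2 hx]) id
  · intro herg
    obtain ⟨k, hk, hpos⟩ := herg 1 1 1
    rcases Nat.lt_or_ge k 2 with h | h
    · interval_cases k
      have : tpow3 P8 1 1 1 1 = 0 := by norm_num [tpow3, tmul3, P8, Fin.sum_univ_three, Fin.forall_fin_succ, Matrix.cons_val_zero, Matrix.cons_val_one]
      rw [this] at hpos; exact lt_irrefl 0 hpos
    · rw [tpow_zero k h 1 1] at hpos; exact lt_irrefl 0 hpos
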